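/- Let k ≥ 1, let n = 3k, and let D_{3k} = ⟨a,b | a^{3k} = b^2 = 1, bab = a^{-1}⟩. Let S = S₁ ∪ S₂ where S₁ = [a] = {a^l : gcd(l,3k) = 1} and S₂ = {b, ba^k}. Then the Cayley graph X(D_{3k},S) is connected and integral, while bS₂ = {1, a^k} is not a union of atoms of B(⟨a⟩). -/

import Mathlib

open DihedralGroup Polynomial

/-- The degree-2 irreducible character `χ_h` of the dihedral group `D_n`:
`χ_h(a^k) = 2cos(2khπ/n)` and `χ_h(ba^k) = 0`. -/
noncomputable def chi (n h : ℕ) : DihedralGroup n → ℝ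
  | .r k => 2 * Real.cos (2 * k.val * h * Real.pi / n)
  | .sr _ => 0

/-- `χ(A) = Σ_{x ∈ A} χ(x)`. -/
noncomputable def chiSum (n h : ℕ) (A : Set (DihedralGroup n)) : ℝ :=
  ∑ᶠ x ∈ A, chi n h x

/-- `χ(A²) = Σ_{x,y ∈ A} χ(xy)`, over ordered pairs. -/
noncomputable def chiSum2 (n h : ℕ) (A : Set (DihedralGroup n)) : ℝ :=
  ∑ᶠ x ∈ A, ∑ᶠ y ∈ A, chi n h (x * y)

/-- The Cayley graph `X(G,S)`: vertices `G`, with `x,y` adjacent iff `x⁻¹y ∈ S`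
(for `S` inverse-closed and not containing `1`). -/
def cayleyGraph {G : Type*} [Group G] (S : Set G) : SimpleGraph G :=
  SimpleGraph.fromRel (fun x y => x⁻¹ * y ∈ S)

open scoped Classical in
/-- The adjacency matrix of a graph, over `ℂ`. -/
noncomputable def adjMat {V : Type*} [Fintype V] (G : SimpleGraph V) : Matrix V V ℂ :=
  Matrix.of fun x y => if G.Adj x y then 1 else 0

/-- A graph is integral if every eigenvalue of its adjacency matrix is an integer. -/
def IsIntegralGraph {V : Type*} [Fintype V] [DecidableEq V] (G : SimpleGraph V) : Prop :=
  ∀ μ ∈ spectrum ℂ (adjMat G), ∃ z : ℤ, μ = (z : ℂ)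

/-- The cyclic subgroup `⟨a⟩` of `D_n`, as a set. -/
def rSet (n : ℕ) : Set (DihedralGroup n) := {x | ∃ k, x = .r k}

/-- The coset `b⟨a⟩` of `D_n`, as a set. -/
def srSet (n : ℕ) : Set (DihedralGroup n) := {x | ∃ k, x = .sr k}

/-- `S` belongs to the Boolean algebra `B(⟨a⟩)`, i.e. `S ⊆ ⟨a⟩` is a union of atoms
`[a^l] = {a^k : gcd(k,n) = gcd(l,n)}`: membership in `S` is constant on each atom. -/
def InBooleanAlgebra (n : ℕ) (S : Set (DihedralGroup n)) : Prop :=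
  S ⊆ rSet n ∧ ∀ k l : ZMod n, Nat.gcd k.val n = Nat.gcd l.val n →
    (DihedralGroup.r k ∈ S ↔ DihedralGroup.r l ∈ S)

/-- The multiplicity of `x` in the multiset `S² = {s₁s₂ : (s₁,s₂) ∈ S × S}` (ordered pairs). -/
noncomputable def sqMult {n : ℕ} (S : Set (DihedralGroup n)) (x : DihedralGroup n) : ℕ :=
  Nat.card {p : DihedralGroup n × DihedralGroup n // p.1 ∈ S ∧ p.2 ∈ S ∧ p.1 * p.2 = x}

/-- The irreducible character `φ_h` of the cyclic group `⟨a⟩` of order `n`: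
`φ_h(a^k) = e^{2πihk/n}`. -/
noncomputable def phi (n h : ℕ) (k : ZMod n) : ℂ :=
  Complex.exp (2 * Real.pi * Complex.I * h * k.val / n)



namespace Stmt15Aux
open Finset DihedralGroup Matrix


noncomputable def om (n : ℕ) : ℂ := Complex.exp (2 * Real.pi * Complex.I / n)

lemma om_prim (n : ℕ) [NeZero n] : IsPrimitiveRoot (om n) n :=
  Complex.isPrimitiveRoot_exp n (NeZero.ne n)

lemma om_pow (n : ℕ) [NeZero n] : om n ^ n = 1 := (om_prim n).pow_eq_one

noncomputable def psi (n : ℕ) [NeZero n] : AddChar (ZMod n) ℂ :=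
  AddChar.zmodChar n (om_pow n)

lemma psi_apply (n : ℕ) [NeZero n] (a : ZMod n) : psi n a = om n ^ a.val := rfl

lemma zero_eq_one_addchar (n : ℕ) [NeZero n] : (0 : AddChar (ZMod n) ℂ) = 1 := by
  ext x; simp

lemma sum_psi (n : ℕ) [NeZero n] (t : ZMod n) :
    ∑ x : ZMod n, psi n (t * x) = if t = 0 then (n : ℂ) else 0 := by
  split_ifs with h
  · subst h; simp [ZMod.card]
  · have hprim : (psi n).IsPrimitive :=
      AddChar.zmodChar_primitive_of_primitive_root n (om_prim n)
    have h2 : AddChar.mulShift (psi n) t ≠ 0 := by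
      rw [zero_eq_one_addchar]; exact hprim h
    have := (AddChar.sum_eq_zero_iff_ne_zero (ψ := AddChar.mulShift (psi n) t)).2 h2
    simpa using this

lemma geom_root_sum (z : ℂ) (M : ℕ) (hz : z ^ M = 1) :
    ∑ j ∈ Finset.range M, z ^ j = if z = 1 then (M : ℂ) else 0 := by
  split_ifs with h
  · subst h; simp
  · rw [geom_sum_eq h, hz, sub_self, zero_div]

lemma moebius_indicator (n m : ℕ) (hn : n ≠ 0) :
    ∑ d ∈ n.divisors, (if d ∣ m then ((ArithmeticFunction.moebius d : ℤ) : ℂ) else 0)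
      = if Nat.gcd m n = 1 then 1 else 0 := by
  rw [← Finset.sum_filter]
  have hset : n.divisors.filter (· ∣ m) = (Nat.gcd m n).divisors := by
    ext d
    simp only [Finset.mem_filter, Nat.mem_divisors, Nat.dvd_gcd_iff]
    constructor
    · rintro ⟨⟨h1, h2⟩, h3⟩
      exact ⟨⟨h3, h1⟩, Nat.gcd_ne_zero_right hn⟩
    · rintro ⟨⟨h1, h2⟩, h3⟩
      exact ⟨⟨h2, hn⟩, h1⟩
  rw [hset]
  have := ArithmeticFunction.moebius_mul_coe_zeta
  have h2 : ((ArithmeticFunction.moebius * ArithmeticFunction.zeta :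
      ArithmeticFunction ℤ)) (Nat.gcd m n) = (1 : ArithmeticFunction ℤ) (Nat.gcd m n) := by
    rw [this]
  rw [ArithmeticFunction.coe_mul_zeta_apply] at h2
  have h3 : (∑ d ∈ (Nat.gcd m n).divisors, ArithmeticFunction.moebius d : ℤ)
      = if Nat.gcd m n = 1 then 1 else 0 := by
    rw [h2]; simp [ArithmeticFunction.one_apply]
  calc ∑ d ∈ (Nat.gcd m n).divisors, ((ArithmeticFunction.moebius d : ℤ) : ℂ)
      = ((∑ d ∈ (Nat.gcd m n).divisors, ArithmeticFunction.moebius d : ℤ) : ℂ) := by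
        push_cast; ring_nf
    _ = _ := by rw [h3]; split_ifs <;> simp

lemma sum_multiples (f : ℕ → ℂ) (d n : ℕ) (hd : d ∣ n) (h0 : 0 < d) :
    ∑ m ∈ (Finset.range n).filter (d ∣ ·), f m = ∑ j ∈ Finset.range (n / d), f (d * j) := by
  refine Finset.sum_nbij' (fun m => m / d) (fun j => d * j) ?_ ?_ ?_ ?_ ?_
  · intro a ha
    simp only [Finset.mem_filter, Finset.mem_range] at ha ⊢
    exact Nat.div_lt_div_of_lt_of_dvd hd ha.1
  · intro j hj
    simp only [Finset.mem_filter, Finset.mem_range] at hj ⊢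
    exact ⟨(Nat.lt_div_iff_mul_lt' hd j).mp hj, dvd_mul_right d j⟩
  · intro a ha
    simp only [Finset.mem_filter] at ha
    exact Nat.mul_div_cancel' ha.2
  · intro j _
    exact Nat.mul_div_cancel_left j h0
  · intro a ha
    simp only [Finset.mem_filter] at ha
    rw [Nat.mul_div_cancel' ha.2]

lemma ramanujan_int (n : ℕ) [NeZero n] (H : ℕ) :
    ∃ z : ℤ, ∑ m ∈ (Finset.range n).filter (fun m => Nat.gcd m n = 1),
      om n ^ (H * m) = (z : ℂ) := by
  classical
  have hn : n ≠ 0 := NeZero.ne n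
  have key : ∑ m ∈ (Finset.range n).filter (fun m => Nat.gcd m n = 1), om n ^ (H * m)
      = ∑ d ∈ n.divisors, ((ArithmeticFunction.moebius d : ℤ) : ℂ) *
          (if om n ^ (H * d) = 1 then ((n / d : ℕ) : ℂ) else 0) := by
    rw [Finset.sum_filter]
    have step1 : ∀ m ∈ Finset.range n,
        (if Nat.gcd m n = 1 then om n ^ (H * m) else 0)
          = ∑ d ∈ n.divisors, (if d ∣ m then ((ArithmeticFunction.moebius d : ℤ) : ℂ) else 0)
              * om n ^ (H * m) := by
      intro m _
      rw [← Finset.sum_mul, moebius_indicator n m hn]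
      split_ifs <;> push_cast <;> ring
    rw [Finset.sum_congr rfl step1, Finset.sum_comm]
    refine Finset.sum_congr rfl ?_
    intro d hd
    obtain ⟨hdvd, -⟩ := Nat.mem_divisors.mp hd
    have hd0 : 0 < d := Nat.pos_of_mem_divisors hd
    calc ∑ m ∈ Finset.range n, (if d ∣ m then ((ArithmeticFunction.moebius d : ℤ) : ℂ) else 0)
          * om n ^ (H * m)
        = ∑ m ∈ (Finset.range n).filter (d ∣ ·),
            ((ArithmeticFunction.moebius d : ℤ) : ℂ) * om n ^ (H * m) := by
          rw [Finset.sum_filter]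
          refine Finset.sum_congr rfl fun m _ => ?_
          split_ifs <;> push_cast <;> ring
      _ = ((ArithmeticFunction.moebius d : ℤ) : ℂ) *
            ∑ m ∈ (Finset.range n).filter (d ∣ ·), om n ^ (H * m) := by
          rw [Finset.mul_sum]
      _ = ((ArithmeticFunction.moebius d : ℤ) : ℂ) *
            ∑ j ∈ Finset.range (n / d), om n ^ (H * (d * j)) := by
          rw [sum_multiples (fun m => om n ^ (H * m)) d n hdvd hd0]
      _ = ((ArithmeticFunction.moebius d : ℤ) : ℂ) *
            ∑ j ∈ Finset.range (n / d), (om n ^ (H * d)) ^ j := by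
          congr 1; refine Finset.sum_congr rfl fun j _ => ?_
          rw [← pow_mul, mul_assoc]
      _ = _ := by
          congr 1
          refine geom_root_sum _ _ ?_
          rw [← pow_mul, mul_assoc, Nat.mul_div_cancel' hdvd, mul_comm H n, pow_mul, om_pow,
            one_pow]
  refine ⟨∑ d ∈ n.divisors, (ArithmeticFunction.moebius d) *
      (if om n ^ (H * d) = 1 then ((n / d : ℕ) : ℤ) else 0), ?_⟩
  rw [key, Int.cast_sum]
  refine Finset.sum_congr rfl fun d _ => ?_
  rw [Int.cast_mul]
  congr 1
  split_ifs
  · exact (Int.cast_natCast _).symm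
  · exact Int.cast_zero.symm

variable (n : ℕ) [NeZero n]

noncomputable def U : Finset (ZMod n) := Finset.univ.filter fun l => Nat.gcd l.val n = 1

lemma mem_U_iff (l : ZMod n) : l ∈ U n ↔ IsUnit l := by
  rw [U, Finset.mem_filter]
  have : ((l.val : ℕ) : ZMod n) = l := ZMod.natCast_rightInverse l
  rw [← this, ZMod.isUnit_iff_coprime]
  simp [Nat.Coprime]

lemma neg_mem_U (l : ZMod n) (h : l ∈ U n) : -l ∈ U n := by
  rw [mem_U_iff] at h ⊢; exact h.neg

noncomputable def cRam (h : ZMod n) : ℂ := ∑ l ∈ U n, psi n (h * l)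

lemma cRam_int (h : ZMod n) : ∃ z : ℤ, cRam n h = (z : ℂ) := by
  obtain ⟨z, hz⟩ := ramanujan_int n h.val
  refine ⟨z, ?_⟩
  rw [← hz, cRam]
  refine Finset.sum_nbij' (fun l => l.val) (fun m => (m : ZMod n)) ?_ ?_ ?_ ?_ ?_
  · intro l hl
    rw [U, Finset.mem_filter] at hl
    simp only [Finset.mem_filter, Finset.mem_range]
    exact ⟨ZMod.val_lt l, hl.2⟩
  · intro m hm
    simp only [Finset.mem_filter, Finset.mem_range] at hm
    rw [U, Finset.mem_filter]
    refine ⟨Finset.mem_univ _, ?_⟩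
    rw [ZMod.val_natCast_of_lt hm.1]
    exact hm.2
  · intro l _; exact ZMod.natCast_rightInverse l
  · intro m hm
    simp only [Finset.mem_filter, Finset.mem_range] at hm
    exact ZMod.val_natCast_of_lt hm.1
  · intro l _
    rw [psi_apply, ZMod.val_mul, ← pow_eq_pow_mod _ (om_pow n)]

lemma cRam_neg (h : ZMod n) : cRam n (-h) = cRam n h := by
  rw [cRam, cRam]
  refine Finset.sum_nbij' (fun l => -l) (fun l => -l) ?_ ?_ ?_ ?_ ?_
  · intro l hl; exact neg_mem_U n l hl
  · intro l hl; exact neg_mem_U n l hl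
  · intro l _; exact neg_neg l
  · intro l _; exact neg_neg l
  · intro l _; ring_nf


lemma psi_mul_neg (n : ℕ) [NeZero n] (a : ZMod n) : psi n a * psi n (-a) = 1 := by
  rw [← AddChar.map_add_eq_mul]; simp

-- sum over dihedral group splits
def dihedralEquiv (n : ℕ) : (ZMod n) ⊕ (ZMod n) ≃ DihedralGroup n where
  toFun i := match i with
    | Sum.inl j => r j
    | Sum.inr j => sr j
  invFun i := match i with
    | r j => Sum.inl j
    | sr j => Sum.inr j
  left_inv := by rintro (x | x) <;> rfl
  right_inv := by rintro (x | x) <;> rfl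

lemma sum_dihedral {n : ℕ} [NeZero n] (f : DihedralGroup n → ℂ) :
    ∑ x : DihedralGroup n, f x
      = (∑ i : ZMod n, f (r i)) + ∑ i : ZMod n, f (sr i) := by
  rw [← Fintype.sum_equiv (dihedralEquiv n) (fun y => f (dihedralEquiv n y)) f (fun y => rfl)]
  rw [Fintype.sum_sum_type]
  rfl

lemma sum_shift_U (n : ℕ) [NeZero n] (i : ZMod n) (f : ZMod n → ℂ) :
    ∑ j : ZMod n, (if j - i ∈ U n then f j else 0) = ∑ l ∈ U n, f (i + l) := by
  rw [← Equiv.sum_comp (Equiv.addLeft i) (fun j => if j - i ∈ U n then f j else 0)]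
  simp only [Equiv.coe_addLeft, add_sub_cancel_left]
  rw [Finset.sum_ite_mem, Finset.univ_inter]

lemma sum_pair_cond (n : ℕ) [NeZero n] (a b : ZMod n) (hab : a ≠ b) (f : ZMod n → ℂ) :
    ∑ j : ZMod n, (if j = a ∨ j = b then f j else 0) = f a + f b := by
  have e1 : ∀ j : ZMod n, (if j = a ∨ j = b then f j else 0)
      = if j ∈ ({a, b} : Finset (ZMod n)) then f j else 0 := by
    intro j; simp [Finset.mem_insert]
  simp_rw [e1]
  rw [Finset.sum_ite_mem, Finset.univ_inter, Finset.sum_pair hab]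

lemma cube_identity (z w : ℂ) (hz : z ^ 3 = 1) (hw : z * w = 1) :
    (1 + z) * (1 + w) = (if z = 1 then (2 : ℂ) else 1) ^ 2 := by
  split_ifs with h
  · subst h
    rw [one_mul] at hw
    rw [hw]; norm_num
  · have h2 : z ^ 2 + z + 1 = 0 := by
      have hfac : (z - 1) * (z ^ 2 + z + 1) = 0 := by linear_combination hz
      rcases mul_eq_zero.mp hfac with h1 | h1
      · exact absurd (sub_eq_zero.mp h1) h
      · exact h1
    have hw2 : w = z ^ 2 := by
      calc w = w * (z * z ^ 2) := by rw [show z * z ^ 2 = z ^ 3 by ring, hz, mul_one]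
        _ = (z * w) * z ^ 2 := by ring
        _ = z ^ 2 := by rw [hw, one_mul]
    rw [hw2]
    linear_combination hz + h2

section Main
variable (k : ℕ) [NeZero (3 * k)]

def Sdef : Set (DihedralGroup (3 * k)) :=
  {x | ∃ l : ZMod (3 * k), x = DihedralGroup.r l ∧ Nat.gcd l.val (3 * k) = 1} ∪
    {DihedralGroup.sr 0, DihedralGroup.sr (k : ZMod (3 * k))}

lemma r_mem_Sdef (l : ZMod (3 * k)) : r l ∈ Sdef k ↔ l ∈ U (3 * k) := by
  rw [Sdef, U]
  simp only [Set.mem_union, Set.mem_setOf_eq, Set.mem_insert_iff, Set.mem_singleton_iff,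
    Finset.mem_filter, Finset.mem_univ, true_and]
  constructor
  · rintro (⟨l', hl', hg⟩ | h | h)
    · obtain rfl : l = l' := by injection hl'
      exact hg
    · exact absurd h (by simp)
    · exact absurd h (by simp)
  · intro hg
    exact Or.inl ⟨l, rfl, hg⟩

lemma sr_mem_Sdef (j : ZMod (3 * k)) :
    sr j ∈ Sdef k ↔ j = 0 ∨ j = (k : ZMod (3 * k)) := by
  rw [Sdef]
  simp only [Set.mem_union, Set.mem_setOf_eq, Set.mem_insert_iff, Set.mem_singleton_iff]
  constructor
  · rintro (⟨l', hl', hg⟩ | h | h)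
    · exact absurd hl' (by simp)
    · left; injection h
    · right; injection h
  · rintro (rfl | rfl)
    · right; left; rfl
    · right; right; rfl

lemma one_not_mem_Sdef (hk : 1 ≤ k) : (1 : DihedralGroup (3 * k)) ∉ Sdef k := by
  rw [one_def, r_mem_Sdef, mem_U_iff]
  haveI : Nontrivial (ZMod (3 * k)) := ZMod.nontrivial_iff.mpr (by omega)
  intro h
  rw [isUnit_zero_iff] at h
  exact zero_ne_one h

lemma inv_mem_Sdef {x : DihedralGroup (3 * k)} (hx : x ∈ Sdef k) : x⁻¹ ∈ Sdef k := by
  cases x with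
  | r l =>
    rw [r_mem_Sdef, mem_U_iff] at hx
    show r (-l) ∈ Sdef k
    rw [r_mem_Sdef, mem_U_iff]
    exact hx.neg
  | sr j =>
    show sr j ∈ Sdef k
    exact hx

lemma adj_iff (hk : 1 ≤ k) (x y : DihedralGroup (3 * k)) :
    (_root_.cayleyGraph (Sdef k)).Adj x y ↔ x⁻¹ * y ∈ Sdef k := by
  rw [_root_.cayleyGraph, SimpleGraph.fromRel_adj]
  constructor
  · rintro ⟨hne, (h | h)⟩
    · exact h
    · have := inv_mem_Sdef k h
      rwa [_root_.mul_inv_rev, inv_inv] at this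
  · intro h
    refine ⟨?_, Or.inl h⟩
    rintro rfl
    rw [inv_mul_cancel] at h
    exact one_not_mem_Sdef k hk h

variable (h : ZMod (3 * k)) (s : ℂ)

noncomputable def mval : ℂ := if psi (3 * k) (h * (k : ZMod (3 * k))) = 1 then 2 else 1
noncomputable def beta : ℂ := 1 + psi (3 * k) (h * (k : ZMod (3 * k)))
noncomputable def betabar : ℂ := 1 + psi (3 * k) (-(h * (k : ZMod (3 * k))))

lemma z_cube : (psi (3 * k) (h * (k : ZMod (3 * k)))) ^ 3 = 1 := by
  have h0 : (3 : ℕ) • (h * (k : ZMod (3 * k))) = 0 := by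
    rw [nsmul_eq_mul]
    have : ((3 : ℕ) : ZMod (3 * k)) * ((k : ℕ) : ZMod (3 * k)) = ((3 * k : ℕ) : ZMod (3 * k)) := by
      push_cast; ring
    calc ((3:ℕ) : ZMod (3*k)) * (h * (k : ZMod (3*k)))
        = h * (((3:ℕ) : ZMod (3*k)) * ((k:ℕ) : ZMod (3*k))) := by ring
      _ = h * ((3 * k : ℕ) : ZMod (3 * k)) := by rw [this]
      _ = 0 := by rw [ZMod.natCast_self, mul_zero]
  rw [← AddChar.map_nsmul_eq_pow, h0, AddChar.map_zero_eq_one]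

lemma beta_mul_betabar : beta k h * betabar k h = mval k h ^ 2 :=
  cube_identity _ _ (z_cube k h) (psi_mul_neg _ _)

lemma mval_ne_zero : mval k h ≠ 0 := by
  rw [mval]; split_ifs <;> norm_num

lemma beta_ne_zero : beta k h ≠ 0 := by
  intro hb
  have := beta_mul_betabar k h
  rw [hb, zero_mul] at this
  exact mval_ne_zero k h (sq_eq_zero_iff.mp this.symm)

noncomputable def vec : DihedralGroup (3 * k) → ℂ
  | .r j => mval k h * psi (3 * k) (h * j)
  | .sr j => s * beta k h * psi (3 * k) (-(h * j))

@[simp] lemma vec_r (j : ZMod (3 * k)) :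
    vec k h s (r j) = mval k h * psi (3 * k) (h * j) := rfl
@[simp] lemma vec_sr (j : ZMod (3 * k)) :
    vec k h s (sr j) = s * beta k h * psi (3 * k) (-(h * j)) := rfl

noncomputable def eig : ℂ := cRam (3 * k) h + s * mval k h

lemma kbar_ne_zero (hk : 1 ≤ k) : (k : ZMod (3 * k)) ≠ 0 := by
  intro hh
  have h1 : (k : ZMod (3 * k)).val = 0 := by rw [hh, ZMod.val_zero]
  rw [ZMod.val_natCast_of_lt (by omega)] at h1
  omega

lemma hadj_rr (hk : 1 ≤ k) (i j : ZMod (3 * k)) :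
    (_root_.cayleyGraph (Sdef k)).Adj (r i) (r j) ↔ j - i ∈ U (3 * k) := by
  rw [adj_iff k hk]
  show r (-i) * r j ∈ Sdef k ↔ _
  rw [r_mul_r, r_mem_Sdef, neg_add_eq_sub]

lemma hadj_rsr (hk : 1 ≤ k) (i j : ZMod (3 * k)) :
    (_root_.cayleyGraph (Sdef k)).Adj (r i) (sr j) ↔ (j = -i ∨ j = (k : ZMod (3 * k)) - i) := by
  rw [adj_iff k hk]
  show r (-i) * sr j ∈ Sdef k ↔ _
  rw [r_mul_sr, sr_mem_Sdef, sub_neg_eq_add]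
  constructor
  · rintro (h1 | h1)
    · exact Or.inl (by linear_combination h1)
    · exact Or.inr (by linear_combination h1)
  · rintro (rfl | rfl)
    · exact Or.inl (by ring)
    · exact Or.inr (by ring)

lemma hadj_srr (hk : 1 ≤ k) (i j : ZMod (3 * k)) :
    (_root_.cayleyGraph (Sdef k)).Adj (sr i) (r j) ↔ (j = -i ∨ j = (k : ZMod (3 * k)) - i) := by
  rw [adj_iff k hk]
  show sr i * r j ∈ Sdef k ↔ _
  rw [sr_mul_r, sr_mem_Sdef]
  constructor
  · rintro (h1 | h1)
    · exact Or.inl (by linear_combination h1)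
    · exact Or.inr (by linear_combination h1)
  · rintro (rfl | rfl)
    · exact Or.inl (by ring)
    · exact Or.inr (by ring)

lemma hadj_srsr (hk : 1 ≤ k) (i j : ZMod (3 * k)) :
    (_root_.cayleyGraph (Sdef k)).Adj (sr i) (sr j) ↔ j - i ∈ U (3 * k) := by
  rw [adj_iff k hk]
  show sr i * sr j ∈ Sdef k ↔ _
  rw [sr_mul_sr, r_mem_Sdef]

lemma neg_ne_sub (hk : 1 ≤ k) (i : ZMod (3 * k)) : -i ≠ (k : ZMod (3 * k)) - i := by
  intro hh
  apply kbar_ne_zero k hk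
  linear_combination (-1 : ZMod (3 * k)) * hh

lemma mulVec_vec (hk : 1 ≤ k) (hs : s ^ 2 = 1) :
    _root_.adjMat (_root_.cayleyGraph (Sdef k)) *ᵥ vec k h s = eig k h s • vec k h s := by
  classical
  have hmv : ∀ x, (_root_.adjMat (_root_.cayleyGraph (Sdef k)) *ᵥ vec k h s) x
      = ∑ y, (if (_root_.cayleyGraph (Sdef k)).Adj x y then vec k h s y else 0) := by
    intro x
    rw [Matrix.mulVec, dotProduct]
    refine Finset.sum_congr rfl fun y _ => ?_
    rw [_root_.adjMat, Matrix.of_apply]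
    split_ifs <;> simp
  have hpsum : ∀ (i : ZMod (3 * k)), ∑ l ∈ U (3 * k), psi (3 * k) (h * (i + l))
      = psi (3 * k) (h * i) * cRam (3 * k) h := by
    intro i
    rw [cRam, Finset.mul_sum]
    refine Finset.sum_congr rfl fun l _ => ?_
    rw [mul_add, AddChar.map_add_eq_mul]
  have hpsumneg : ∀ (i : ZMod (3 * k)), ∑ l ∈ U (3 * k), psi (3 * k) (-(h * (i + l)))
      = psi (3 * k) (-(h * i)) * cRam (3 * k) h := by
    intro i
    rw [← cRam_neg, cRam, Finset.mul_sum]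
    refine Finset.sum_congr rfl fun l _ => ?_
    rw [show -(h * (i + l)) = -(h * i) + (-h) * l by ring, AddChar.map_add_eq_mul]
  funext x
  rw [hmv]
  cases x with
  | r i =>
    rw [sum_dihedral]
    simp only [hadj_rr k hk, hadj_rsr k hk, vec_r, vec_sr]
    rw [sum_shift_U, sum_pair_cond _ _ _ (neg_ne_sub k hk i)]
    have e1 : ∑ l ∈ U (3 * k), mval k h * psi (3 * k) (h * (i + l))
        = mval k h * (psi (3 * k) (h * i) * cRam (3 * k) h) := by
      rw [← Finset.mul_sum, hpsum]
    rw [e1]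
    have e2 : psi (3 * k) (-(h * -i)) = psi (3 * k) (h * i) := by ring_nf
    have e3 : psi (3 * k) (-(h * ((k : ZMod (3 * k)) - i)))
        = psi (3 * k) (-(h * (k : ZMod (3 * k)))) * psi (3 * k) (h * i) := by
      rw [show -(h * ((k : ZMod (3 * k)) - i)) = -(h * (k : ZMod (3 * k))) + h * i by ring,
        AddChar.map_add_eq_mul]
    rw [e2, e3]
    have key : beta k h * (1 + psi (3 * k) (-(h * (k : ZMod (3 * k))))) = mval k h ^ 2 :=
      beta_mul_betabar k h
    rw [Pi.smul_apply, vec_r, eig, smul_eq_mul]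
    have hb := beta_mul_betabar k h
    rw [betabar] at hb
    linear_combination (s * psi (3 * k) (h * i)) * hb
  | sr i =>
    rw [sum_dihedral]
    simp only [hadj_srr k hk, hadj_srsr k hk, vec_r, vec_sr]
    rw [sum_shift_U, sum_pair_cond _ _ _ (neg_ne_sub k hk i)]
    have e1 : ∑ l ∈ U (3 * k), s * beta k h * psi (3 * k) (-(h * (i + l)))
        = s * beta k h * (psi (3 * k) (-(h * i)) * cRam (3 * k) h) := by
      rw [← Finset.mul_sum, hpsumneg]
    rw [e1]
    have e2 : psi (3 * k) (h * -i) = psi (3 * k) (-(h * i)) := by ring_nf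
    have e3 : psi (3 * k) (h * ((k : ZMod (3 * k)) - i))
        = psi (3 * k) (h * (k : ZMod (3 * k))) * psi (3 * k) (-(h * i)) := by
      rw [show h * ((k : ZMod (3 * k)) - i) = h * (k : ZMod (3 * k)) + -(h * i) by ring,
        AddChar.map_add_eq_mul]
    rw [e2, e3]
    rw [Pi.smul_apply, vec_sr, eig, smul_eq_mul]
    have hbdef : beta k h = 1 + psi (3 * k) (h * (k : ZMod (3 * k))) := rfl
    linear_combination (-(mval k h * psi (3 * k) (-(h * i)))) * hbdef +
      (-(mval k h * beta k h * psi (3 * k) (-(h * i)))) * hs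
-- basis vectors
noncomputable def fvec : DihedralGroup (3 * k) → ℂ
  | .r j => psi (3 * k) (h * j)
  | .sr _ => 0

noncomputable def gvec : DihedralGroup (3 * k) → ℂ
  | .r _ => 0
  | .sr j => psi (3 * k) (-(h * j))

lemma fvec_comb : vec k h 1 + vec k h (-1) = (2 * mval k h) • fvec k h := by
  funext x
  cases x with
  | r j => show _ = (2 * mval k h) * psi (3 * k) (h * j); rw [Pi.add_apply, vec_r, vec_r]; ring
  | sr j => show _ = (2 * mval k h) * 0; rw [Pi.add_apply, vec_sr, vec_sr]; ring

lemma gvec_comb : vec k h 1 - vec k h (-1) = (2 * beta k h) • gvec k h := by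
  funext x
  cases x with
  | r j => show _ = (2 * beta k h) * 0; rw [Pi.sub_apply, vec_r, vec_r]; ring
  | sr j => show _ = (2 * beta k h) * psi (3 * k) (-(h * j)); rw [Pi.sub_apply, vec_sr, vec_sr]; ring

noncomputable def deltaFn (x : DihedralGroup (3 * k)) : DihedralGroup (3 * k) → ℂ :=
  fun y => if x = y then 1 else 0

lemma delta_r_comb (j : ZMod (3 * k)) :
    deltaFn k (r j) = ((3 * k : ℕ) : ℂ)⁻¹ • ∑ h : ZMod (3 * k), psi (3 * k) (-(h * j)) • fvec k h := by
  have hn : ((3 * k : ℕ) : ℂ) ≠ 0 := Nat.cast_ne_zero.mpr (NeZero.ne _)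
  funext y
  rw [deltaFn]
  cases y with
  | r i =>
    have e1 : ∀ h : ZMod (3 * k), psi (3 * k) (-(h * j)) * fvec k h (r i)
        = psi (3 * k) ((i - j) * h) := by
      intro h
      show psi (3 * k) (-(h * j)) * psi (3 * k) (h * i) = _
      rw [← AddChar.map_add_eq_mul]
      congr 1; ring
    rw [Pi.smul_apply, Finset.sum_apply]
    simp only [Pi.smul_apply, smul_eq_mul]
    rw [Finset.sum_congr rfl fun h _ => e1 h, sum_psi (3 * k) (i - j)]
    by_cases hij : i = j
    · subst hij
      rw [if_pos rfl, if_pos (sub_self i), inv_mul_cancel₀ hn]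
    · rw [if_neg (by simpa using (Ne.symm hij)), if_neg (fun hc => hij (by linear_combination hc)),
        mul_zero]
  | sr i =>
    rw [Pi.smul_apply, Finset.sum_apply]
    simp only [Pi.smul_apply, smul_eq_mul]
    have : ∀ h : ZMod (3 * k), psi (3 * k) (-(h * j)) * fvec k h (sr i) = 0 := by
      intro h; show psi (3 * k) (-(h * j)) * 0 = 0; ring
    rw [Finset.sum_congr rfl fun h _ => this h]
    simp

lemma delta_sr_comb (j : ZMod (3 * k)) :
    deltaFn k (sr j) = ((3 * k : ℕ) : ℂ)⁻¹ • ∑ h : ZMod (3 * k), psi (3 * k) (h * j) • gvec k h := by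
  have hn : ((3 * k : ℕ) : ℂ) ≠ 0 := Nat.cast_ne_zero.mpr (NeZero.ne _)
  funext y
  rw [deltaFn]
  cases y with
  | r i =>
    rw [Pi.smul_apply, Finset.sum_apply]
    simp only [Pi.smul_apply, smul_eq_mul]
    have : ∀ h : ZMod (3 * k), psi (3 * k) (h * j) * gvec k h (r i) = 0 := by
      intro h; show psi (3 * k) (h * j) * 0 = 0; ring
    rw [Finset.sum_congr rfl fun h _ => this h]
    simp
  | sr i =>
    have e1 : ∀ h : ZMod (3 * k), psi (3 * k) (h * j) * gvec k h (sr i)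
        = psi (3 * k) ((j - i) * h) := by
      intro h
      show psi (3 * k) (h * j) * psi (3 * k) (-(h * i)) = _
      rw [← AddChar.map_add_eq_mul]
      congr 1; ring
    rw [Pi.smul_apply, Finset.sum_apply]
    simp only [Pi.smul_apply, smul_eq_mul]
    rw [Finset.sum_congr rfl fun h _ => e1 h, sum_psi (3 * k) (j - i)]
    by_cases hij : j = i
    · subst hij
      rw [if_pos rfl, if_pos (sub_self j), inv_mul_cancel₀ hn]
    · rw [if_neg (by simpa using hij), if_neg (fun hc => hij (by linear_combination hc)),
        mul_zero]

lemma matrix_zero_of_vec (M : Matrix (DihedralGroup (3 * k)) (DihedralGroup (3 * k)) ℂ)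
    (hM : ∀ h : ZMod (3 * k), M *ᵥ vec k h 1 = 0 ∧ M *ᵥ vec k h (-1) = 0) :
    M = 0 := by
  classical
  have hf : ∀ h : ZMod (3 * k), M *ᵥ fvec k h = 0 := by
    intro h
    have h2 : M *ᵥ ((2 * mval k h) • fvec k h) = 0 := by
      rw [← fvec_comb, Matrix.mulVec_add, (hM h).1, (hM h).2, add_zero]
    rw [Matrix.mulVec_smul] at h2
    have hne : (2 * mval k h) ≠ 0 := mul_ne_zero two_ne_zero (mval_ne_zero k h)
    exact (smul_eq_zero.mp h2).resolve_left hne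
  have hg : ∀ h : ZMod (3 * k), M *ᵥ gvec k h = 0 := by
    intro h
    have h2 : M *ᵥ ((2 * beta k h) • gvec k h) = 0 := by
      rw [← gvec_comb, Matrix.mulVec_sub, (hM h).1, (hM h).2, sub_zero]
    rw [Matrix.mulVec_smul] at h2
    have hne : (2 * beta k h) ≠ 0 := mul_ne_zero two_ne_zero (beta_ne_zero k h)
    exact (smul_eq_zero.mp h2).resolve_left hne
  have hdelta : ∀ x : DihedralGroup (3 * k), M *ᵥ deltaFn k x = 0 := by
    intro x
    cases x with
    | r j =>
      rw [delta_r_comb, Matrix.mulVec_smul]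
      have : M *ᵥ (∑ h : ZMod (3 * k), psi (3 * k) (-(h * j)) • fvec k h) = 0 := by
        rw [show (∑ h : ZMod (3 * k), psi (3 * k) (-(h * j)) • fvec k h)
            = ∑ h : ZMod (3 * k), psi (3 * k) (-(h * j)) • fvec k h from rfl]
        rw [← Matrix.mulVecLin_apply, map_sum]
        refine Finset.sum_eq_zero fun h _ => ?_
        rw [_root_.map_smul, Matrix.mulVecLin_apply, hf h, smul_zero]
      rw [this, smul_zero]
    | sr j =>
      rw [delta_sr_comb, Matrix.mulVec_smul]
      have : M *ᵥ (∑ h : ZMod (3 * k), psi (3 * k) (h * j) • gvec k h) = 0 := by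
        rw [← Matrix.mulVecLin_apply, map_sum]
        refine Finset.sum_eq_zero fun h _ => ?_
        rw [_root_.map_smul, Matrix.mulVecLin_apply, hg h, smul_zero]
      rw [this, smul_zero]
  have hall : ∀ v : DihedralGroup (3 * k) → ℂ, M *ᵥ v = 0 := by
    intro v
    rw [pi_eq_sum_univ v, ← Matrix.mulVecLin_apply, map_sum]
    refine Finset.sum_eq_zero fun x _ => ?_
    rw [_root_.map_smul, Matrix.mulVecLin_apply]
    have : (fun j => if x = j then (1:ℂ) else 0) = deltaFn k x := rfl
    rw [this, hdelta x, smul_zero]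
  ext x y
  have := congrFun (hall (deltaFn k y)) x
  rw [Matrix.mulVec, dotProduct] at this
  simpa [deltaFn, mul_ite, eq_comm] using this
lemma aeval_mulVec {V : Type*} [Fintype V] [DecidableEq V] (A : Matrix V V ℂ) (v : V → ℂ)
    (μ : ℂ) (hv : A *ᵥ v = μ • v) (p : Polynomial ℂ) :
    (Polynomial.aeval A p) *ᵥ v = p.eval μ • v := by
  have hpow : ∀ m : ℕ, (A ^ m) *ᵥ v = μ ^ m • v := by
    intro m
    induction m with
    | zero => simp
    | succ m ih =>
      rw [pow_succ, ← Matrix.mulVec_mulVec, hv, Matrix.mulVec_smul, ih, smul_smul, pow_succ]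
      ring_nf
  induction p using Polynomial.induction_on' with
  | add p q hp hq =>
    rw [map_add, Matrix.add_mulVec, hp, hq, Polynomial.eval_add, add_smul]
  | monomial m c =>
    rw [Polynomial.aeval_monomial, Polynomial.eval_monomial]
    rw [show (algebraMap ℂ (Matrix V V ℂ)) c * A ^ m = c • (A ^ m : Matrix V V ℂ) by
      rw [Algebra.algebraMap_eq_smul_one, smul_mul_assoc, one_mul]]
    rw [Matrix.smul_mulVec, hpow, smul_smul]

lemma spectrum_eigvec {V : Type*} [Fintype V] [DecidableEq V] [Nonempty V]
    (A : Matrix V V ℂ) (μ : ℂ) (hμ : μ ∈ spectrum ℂ A) :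
    ∃ v : V → ℂ, v ≠ 0 ∧ A *ᵥ v = μ • v := by
  rw [spectrum.mem_iff] at hμ
  have hdet : (algebraMap ℂ (Matrix V V ℂ) μ - A).det = 0 := by
    by_contra hne
    exact hμ ((Matrix.isUnit_iff_isUnit_det _).mpr (isUnit_iff_ne_zero.mpr hne))
  obtain ⟨v, hv0, hv⟩ := (Matrix.exists_mulVec_eq_zero_iff).mpr hdet
  refine ⟨v, hv0, ?_⟩
  rw [Matrix.sub_mulVec] at hv
  have h2 : algebraMap ℂ (Matrix V V ℂ) μ *ᵥ v = μ • v := by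
    rw [Algebra.algebraMap_eq_smul_one, Matrix.smul_mulVec, Matrix.one_mulVec]
  rw [h2, sub_eq_zero] at hv
  exact hv.symm

lemma eig_int (h : ZMod (3 * k)) (s : ℂ) (hs : s = 1 ∨ s = -1) :
    ∃ z : ℤ, eig k h s = (z : ℂ) := by
  obtain ⟨z, hz⟩ := cRam_int (3 * k) h
  rw [eig, hz, mval]
  rcases hs with rfl | rfl <;> split_ifs
  · exact ⟨z + 2, by push_cast; ring⟩
  · exact ⟨z + 1, by push_cast; ring⟩
  · exact ⟨z - 2, by push_cast; ring⟩
  · exact ⟨z - 1, by push_cast; ring⟩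

lemma integral_lemma (hk : 1 ≤ k) :
    ∀ μ ∈ spectrum ℂ (_root_.adjMat (_root_.cayleyGraph (Sdef k))), ∃ z : ℤ, μ = (z : ℂ) := by
  classical
  intro μ hμ
  set A := _root_.adjMat (_root_.cayleyGraph (Sdef k)) with hA
  set p : Polynomial ℂ := ∏ h : ZMod (3 * k),
    ((Polynomial.X - Polynomial.C (eig k h 1)) *
      (Polynomial.X - Polynomial.C (eig k h (-1)))) with hp
  have hzero : Polynomial.aeval A p = 0 := by
    apply matrix_zero_of_vec
    intro h
    constructor
    · rw [aeval_mulVec A _ (eig k h 1) (mulVec_vec k h 1 hk (by norm_num))]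
      have : p.eval (eig k h 1) = 0 := by
        rw [hp, Polynomial.eval_prod]
        exact Finset.prod_eq_zero (Finset.mem_univ h) (by simp)
      rw [this, zero_smul]
    · rw [aeval_mulVec A _ (eig k h (-1)) (mulVec_vec k h (-1) hk (by norm_num))]
      have : p.eval (eig k h (-1)) = 0 := by
        rw [hp, Polynomial.eval_prod]
        exact Finset.prod_eq_zero (Finset.mem_univ h) (by simp)
      rw [this, zero_smul]
  obtain ⟨v, hv0, hv⟩ := spectrum_eigvec A μ hμ
  have h1 : (Polynomial.aeval A p) *ᵥ v = p.eval μ • v := aeval_mulVec A v μ hv p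
  rw [hzero, Matrix.zero_mulVec] at h1
  have h2 : p.eval μ = 0 := by
    rcases smul_eq_zero.mp h1.symm with h | h
    · exact h
    · exact absurd h hv0
  rw [hp, Polynomial.eval_prod] at h2
  obtain ⟨h, -, hfac⟩ := Finset.prod_eq_zero_iff.mp h2
  rw [Polynomial.eval_mul] at hfac
  rcases mul_eq_zero.mp hfac with hf | hf
  · have hμe : μ = eig k h 1 := by
      rw [Polynomial.eval_sub, Polynomial.eval_X, Polynomial.eval_C, sub_eq_zero] at hf
      exact hf
    obtain ⟨z, hz⟩ := eig_int k h 1 (Or.inl rfl)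
    exact ⟨z, hμe.trans hz⟩
  · have hμe : μ = eig k h (-1) := by
      rw [Polynomial.eval_sub, Polynomial.eval_X, Polynomial.eval_C, sub_eq_zero] at hf
      exact hf
    obtain ⟨z, hz⟩ := eig_int k h (-1) (Or.inr rfl)
    exact ⟨z, hμe.trans hz⟩

lemma connected_lemma (hk : 1 ≤ k) : (_root_.cayleyGraph (Sdef k)).Connected := by
  rw [SimpleGraph.connected_iff]
  refine ⟨?_, ⟨1⟩⟩
  have hr : ∀ m : ℕ, (_root_.cayleyGraph (Sdef k)).Reachable (r 0) (r (m : ZMod (3 * k))) := by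
    intro m
    induction m with
    | zero =>
      rw [Nat.cast_zero]
    | succ m ih =>
      refine ih.trans (SimpleGraph.Adj.reachable ?_)
      rw [hadj_rr k hk]
      have e : ((m + 1 : ℕ) : ZMod (3 * k)) - ((m : ℕ) : ZMod (3 * k)) = 1 := by
        push_cast; ring
      rw [e, mem_U_iff]
      exact isUnit_one
  have hrall : ∀ j : ZMod (3 * k), (_root_.cayleyGraph (Sdef k)).Reachable (r 0) (r j) := by
    intro j
    have := hr j.val
    rwa [ZMod.natCast_rightInverse j] at this
  have hall : ∀ x : DihedralGroup (3 * k), (_root_.cayleyGraph (Sdef k)).Reachable (r 0) x := by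
    intro x
    cases x with
    | r j => exact hrall j
    | sr j =>
      refine (hrall (-j)).trans (SimpleGraph.Adj.reachable ?_)
      rw [hadj_rsr k hk]
      exact Or.inl (neg_neg j).symm
  intro x y
  exact (hall x).symm.trans (hall y)

lemma not_bool (hk : 1 ≤ k) :
    ¬ _root_.InBooleanAlgebra (3 * k) {DihedralGroup.r 0, DihedralGroup.r (k : ZMod (3 * k))} := by
  rintro ⟨-, hatom⟩
  have hval1 : ((k : ℕ) : ZMod (3 * k)).val = k := ZMod.val_natCast_of_lt (by omega)
  have hval2 : ((2 * k : ℕ) : ZMod (3 * k)).val = 2 * k := ZMod.val_natCast_of_lt (by omega)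
  have hg : Nat.gcd ((k : ℕ) : ZMod (3 * k)).val (3 * k)
      = Nat.gcd ((2 * k : ℕ) : ZMod (3 * k)).val (3 * k) := by
    rw [hval1, hval2]
    have h1 : Nat.gcd k (3 * k) = k := Nat.gcd_eq_left (dvd_mul_left k 3)
    have h2 : Nat.gcd (2 * k) (3 * k) = k := by
      have := Nat.gcd_mul_right 2 k 3
      norm_num at this
      omega
    rw [h1, h2]
  have hmem : DihedralGroup.r ((k : ℕ) : ZMod (3 * k))
      ∈ ({DihedralGroup.r 0, DihedralGroup.r (k : ZMod (3 * k))} :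
        Set (DihedralGroup (3 * k))) := Or.inr rfl
  have h2k := (hatom _ _ hg).mp hmem
  rcases h2k with hc | hc
  · have : ((2 * k : ℕ) : ZMod (3 * k)) = 0 := by injection hc
    have := congrArg ZMod.val this
    rw [hval2, ZMod.val_zero] at this
    omega
  · have : ((2 * k : ℕ) : ZMod (3 * k)) = (k : ZMod (3 * k)) := by injection hc
    have := congrArg ZMod.val this
    rw [hval2, hval1] at this
    omega
end Main

end Stmt15Aux

/-- Example 3.8. In `D_{3k}` with `S₁ = [a] = {a^l : gcd(l,3k) = 1}` and
`S₂ = {b, ba^k}`, the Cayley graph `X(D_{3k}, S₁ ∪ S₂)` is connected and integral, yet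
`bS₂ = {1, a^k}` is not a union of atoms of `B(⟨a⟩)`. -/
theorem stmt15 (k : ℕ) (hk : 1 ≤ k) [NeZero (3 * k)]
    (S₁ S₂ S : Set (DihedralGroup (3 * k)))
    (hS₁ : S₁ = {x | ∃ l : ZMod (3 * k), x = DihedralGroup.r l ∧ Nat.gcd l.val (3 * k) = 1})
    (hS₂ : S₂ = {DihedralGroup.sr 0, DihedralGroup.sr (k : ZMod (3 * k))})
    (hS : S = S₁ ∪ S₂) :
    (cayleyGraph S).Connected ∧ IsIntegralGraph (cayleyGraph S) ∧
      ¬ InBooleanAlgebra (3 * k)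
        {DihedralGroup.r 0, DihedralGroup.r (k : ZMod (3 * k))} := by
  have hSd : S = Stmt15Aux.Sdef k := by rw [hS, hS₁, hS₂]; rfl
  refine ⟨?_, ?_, ?_⟩
  · rw [hSd]
    exact Stmt15Aux.connected_lemma k hk
  · intro μ hμ
    rw [hSd] at hμ
    exact Stmt15Aux.integral_lemma k hk μ hμ
  · exact Stmt15Aux.not_bool k hk
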